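/- The formal power series A with zero constant term satisfying (1+A)^2 = e^{x(2+A)} also satisfies A = ∑_{n≥1} (2+A)^{n-1} x^n/n!, and consequently all coefficients of A as an exponential generating function are integers. -/

import Mathlib

open PowerSeries

/-- A Hurwitz series: a formal power series `∑ f_n x^n / n!` over `ℚ` with all
`f_n = n! · (coefficient of x^n)` integers. -/
def IsHurwitz (f : PowerSeries ℚ) : Prop :=
  ∀ n : ℕ, ∃ m : ℤ, (n.factorial : ℚ) * PowerSeries.coeff n f = (m : ℚ)

/-- Composition `f(g(x))` of formal power series, valid when `g` has zero
constant term. -/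
noncomputable def PowerSeries.comp (f g : PowerSeries ℚ) : PowerSeries ℚ :=
  PowerSeries.mk fun n =>
    ∑ k ∈ Finset.range (n + 1), PowerSeries.coeff k f * PowerSeries.coeff n (g ^ k)

/-- The formal exponential `e^S` of a power series `S` with zero constant term. -/
noncomputable def PowerSeries.expOf (S : PowerSeries ℚ) : PowerSeries ℚ :=
  PowerSeries.comp (exp ℚ) S

open Finset

private lemma coeff_two' (j : ℕ) :
    PowerSeries.coeff j (2 : PowerSeries ℚ) = if j = 0 then 2 else 0 := by
  rw [show (2 : PowerSeries ℚ) = PowerSeries.C 2 from (map_ofNat (PowerSeries.C) 2).symm,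
    PowerSeries.coeff_C]

private lemma hz_one : IsHurwitz 1 := by
  intro n
  refine ⟨if n = 0 then 1 else 0, ?_⟩
  rw [PowerSeries.coeff_one]
  split <;> simp_all

private lemma hz_mul {f g : PowerSeries ℚ} (hf : IsHurwitz f) (hg : IsHurwitz g) :
    IsHurwitz (f * g) := by
  intro n
  refine ⟨∑ p ∈ antidiagonal n, (n.choose p.1 : ℤ) * (hf p.1).choose * (hg p.2).choose, ?_⟩
  rw [PowerSeries.coeff_mul, Finset.mul_sum]
  push_cast
  refine Finset.sum_congr rfl fun p hp => ?_
  have hpn : p.1 + p.2 = n := Finset.HasAntidiagonal.mem_antidiagonal.mp hp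
  have h1 := (hf p.1).choose_spec
  have h2 := (hg p.2).choose_spec
  have hfac : (n.factorial : ℚ) = (n.choose p.1) * p.1.factorial * p.2.factorial := by
    have h := Nat.choose_mul_factorial_mul_factorial (show p.1 ≤ n by omega)
    rw [show n - p.1 = p.2 by omega] at h
    exact_mod_cast h.symm
  rw [hfac, ← h1, ← h2]; ring

private lemma hz_pow {f : PowerSeries ℚ} (hf : IsHurwitz f) : ∀ k, IsHurwitz (f ^ k)
  | 0 => by rw [pow_zero]; exact hz_one
  | k + 1 => by rw [pow_succ]; exact hz_mul (hz_pow hf k) hf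

private lemma coeff_pow_congr {f g : PowerSeries ℚ} {N : ℕ}
    (h : ∀ j ≤ N, PowerSeries.coeff j f = PowerSeries.coeff j g) (k : ℕ) :
    ∀ j ≤ N, PowerSeries.coeff j (f ^ k) = PowerSeries.coeff j (g ^ k) := by
  induction k with
  | zero => intro j hj; simp
  | succ k ih =>
    intro j hj
    rw [pow_succ, pow_succ, PowerSeries.coeff_mul, PowerSeries.coeff_mul]
    refine Finset.sum_congr rfl fun p hp => ?_
    have hpj := Finset.HasAntidiagonal.mem_antidiagonal.mp hp
    rw [ih p.1 (by omega), h p.2 (by omega)]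

/-- Any power series `A` over `ℚ` with zero constant term satisfying
`(1+A)^2 = e^{x(2+A)}` also satisfies `A = ∑_{n≥1} (2+A)^{n-1} x^n/n!`
(the infinite sum is a well-defined power series since the `n`-th term has order
at least `n`; here it is written coefficientwise), and consequently `A` is a
Hurwitz series. -/
theorem alternating_trees_hurwitz (A : PowerSeries ℚ)
    (h0 : PowerSeries.constantCoeff A = 0)
    (hA : (1 + A) ^ 2 = PowerSeries.expOf (PowerSeries.X * (2 + A))) :
    A = (PowerSeries.mk fun m =>
          ∑ n ∈ Finset.Icc 1 m,
            PowerSeries.coeff m ((2 + A) ^ (n - 1) * PowerSeries.X ^ n)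
              / (n.factorial : ℚ)) ∧
    IsHurwitz A := by
  set S : PowerSeries ℚ := PowerSeries.mk fun m =>
      ∑ n ∈ Finset.Icc 1 m,
        PowerSeries.coeff m ((2 + A) ^ (n - 1) * PowerSeries.X ^ n)
          / (n.factorial : ℚ) with hS
  have key : S * (2 + A) = PowerSeries.expOf (PowerSeries.X * (2 + A)) - 1 := by
    ext m
    rw [map_sub, PowerSeries.coeff_mul, PowerSeries.coeff_one]
    have hrhs : PowerSeries.coeff m (PowerSeries.expOf (PowerSeries.X * (2 + A)))
        = (if m = 0 then (1 : ℚ) else 0)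
          + ∑ n ∈ Icc 1 m, (n.factorial : ℚ)⁻¹
              * PowerSeries.coeff m ((PowerSeries.X * (2 + A)) ^ n) := by
      rw [PowerSeries.expOf, PowerSeries.comp, PowerSeries.coeff_mk, Finset.sum_range_succ',
        add_comm]
      congr 1
      · simp [PowerSeries.coeff_exp, PowerSeries.coeff_one]
      · rw [show Icc 1 m = Ico 1 (m + 1) from rfl, Finset.sum_Ico_eq_sum_range]
        simp only [add_tsub_cancel_right, Nat.add_sub_cancel]
        refine Finset.sum_congr (by norm_num) fun k _ => ?_
        rw [PowerSeries.coeff_exp]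
        simp [add_comm 1 k, one_div]
    have hdom : ∀ p ∈ antidiagonal m, PowerSeries.coeff p.1 S
        = ∑ n ∈ Icc 1 m,
            PowerSeries.coeff p.1 ((2 + A) ^ (n - 1) * PowerSeries.X ^ n)
              / (n.factorial : ℚ) := by
      intro p hp
      have hp1 : p.1 ≤ m := by have := Finset.HasAntidiagonal.mem_antidiagonal.mp hp; omega
      rw [hS, PowerSeries.coeff_mk]
      refine Finset.sum_subset (Finset.Icc_subset_Icc_right hp1) fun n hn hn' => ?_
      have hnp : ¬ n ≤ p.1 := by
        simp only [Finset.mem_Icc] at hn hn'; omega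
      rw [PowerSeries.coeff_mul_X_pow', if_neg hnp, zero_div]
    have main : (∑ p ∈ antidiagonal m,
          PowerSeries.coeff p.1 S * PowerSeries.coeff p.2 (2 + A))
        = ∑ n ∈ Icc 1 m, (n.factorial : ℚ)⁻¹
            * PowerSeries.coeff m ((PowerSeries.X * (2 + A)) ^ n) := by
      calc (∑ p ∈ antidiagonal m,
            PowerSeries.coeff p.1 S * PowerSeries.coeff p.2 (2 + A))
          = ∑ p ∈ antidiagonal m, ∑ n ∈ Icc 1 m,
              (PowerSeries.coeff p.1 ((2 + A) ^ (n - 1) * PowerSeries.X ^ n)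
                * PowerSeries.coeff p.2 (2 + A)) / (n.factorial : ℚ) := by
            refine Finset.sum_congr rfl fun p hp => ?_
            rw [hdom p hp, Finset.sum_mul]
            refine Finset.sum_congr rfl fun n _ => ?_
            ring
        _ = ∑ n ∈ Icc 1 m, (∑ p ∈ antidiagonal m,
              PowerSeries.coeff p.1 ((2 + A) ^ (n - 1) * PowerSeries.X ^ n)
                * PowerSeries.coeff p.2 (2 + A)) / (n.factorial : ℚ) := by
            rw [Finset.sum_comm]
            exact Finset.sum_congr rfl fun n _ => (Finset.sum_div _ _ _).symm
        _ = ∑ n ∈ Icc 1 m, (n.factorial : ℚ)⁻¹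
              * PowerSeries.coeff m ((PowerSeries.X * (2 + A)) ^ n) := by
            refine Finset.sum_congr rfl fun n hn => ?_
            rw [← PowerSeries.coeff_mul]
            have h1 : 1 ≤ n := (Finset.mem_Icc.mp hn).1
            obtain ⟨j, rfl⟩ : ∃ j, n = j + 1 := ⟨n - 1, by omega⟩
            have hid : (2 + A) ^ (j + 1 - 1) * PowerSeries.X ^ (j + 1) * (2 + A)
                = (PowerSeries.X * (2 + A)) ^ (j + 1) := by
              simp only [Nat.add_sub_cancel]
              rw [mul_pow]
              ring
            rw [hid]
            ring
    rw [main, hrhs]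
    ring
  have h2A : PowerSeries.constantCoeff (2 + A) = 2 := by
    rw [map_add, h0, add_zero]
    exact map_ofNat _ 2
  have h2A_ne : (2 + A : PowerSeries ℚ) ≠ 0 := by
    intro h
    rw [h] at h2A
    simp at h2A
  have hAS : A = S := by
    have : A * (2 + A) = S * (2 + A) := by
      rw [key, ← hA]; ring
    exact mul_right_cancel₀ h2A_ne this
  refine ⟨hAS, ?_⟩
  have hcoeff : ∀ n : ℕ, PowerSeries.coeff n A
      = ∑ k ∈ Icc 1 n, PowerSeries.coeff (n - k) ((2 + A) ^ (k - 1))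
          / (k.factorial : ℚ) := by
    intro n
    conv_lhs => rw [hAS]
    rw [hS, PowerSeries.coeff_mk]
    refine Finset.sum_congr rfl fun k hk => ?_
    rw [PowerSeries.coeff_mul_X_pow', if_pos (Finset.mem_Icc.mp hk).2]
  intro n
  induction n using Nat.strong_induction_on with
  | _ n IH =>
    rcases Nat.eq_zero_or_pos n with rfl | hn
    · exact ⟨0, by simp [PowerSeries.coeff_zero_eq_constantCoeff, h0]⟩
    · set B : PowerSeries ℚ := PowerSeries.mk fun j =>
        if j < n then PowerSeries.coeff j A else 0 with hB
      have hBH : IsHurwitz (2 + B) := by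
        intro j
        obtain ⟨z, hz⟩ : ∃ z : ℤ, (j.factorial : ℚ) * PowerSeries.coeff j B = z := by
          by_cases h : j < n
          · obtain ⟨z, hz⟩ := IH j h
            exact ⟨z, by rw [hB, PowerSeries.coeff_mk, if_pos h]; exact hz⟩
          · exact ⟨0, by rw [hB, PowerSeries.coeff_mk, if_neg h]; simp⟩
        refine ⟨(if j = 0 then 2 else 0) + z, ?_⟩
        rw [map_add, mul_add, hz, coeff_two' j]
        push_cast
        rcases eq_or_ne j 0 with rfl | hj
        · norm_num
        · simp [hj]
      have hpow : ∀ k : ℕ, IsHurwitz ((2 + B) ^ k) := fun k => hz_pow hBH k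
      have hcon : ∀ k ∈ Icc 1 n, PowerSeries.coeff (n - k) ((2 + A) ^ (k - 1))
          = PowerSeries.coeff (n - k) ((2 + B) ^ (k - 1)) := by
        intro k hk
        obtain ⟨h1, h2⟩ := Finset.mem_Icc.mp hk
        refine coeff_pow_congr (N := n - 1) ?_ (k - 1) (n - k) (by omega)
        intro j hj
        rw [map_add, map_add, hB, PowerSeries.coeff_mk, if_pos (by omega)]
      refine ⟨∑ k ∈ Icc 1 n, (n.choose k : ℤ) * (hpow (k - 1) (n - k)).choose, ?_⟩
      rw [hcoeff n, Finset.mul_sum]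
      push_cast
      refine Finset.sum_congr rfl fun k hk => ?_
      obtain ⟨h1, h2⟩ := Finset.mem_Icc.mp hk
      have hz := (hpow (k - 1) (n - k)).choose_spec
      rw [hcon k hk, ← hz]
      have hfac : (n.factorial : ℚ)
          = (n.choose k) * k.factorial * (n - k).factorial := by
        exact_mod_cast (Nat.choose_mul_factorial_mul_factorial h2).symm
      have hk0 : (k.factorial : ℚ) ≠ 0 := Nat.cast_ne_zero.mpr k.factorial_ne_zero
      rw [hfac]
      field_simp
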